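/- Let X• be a 2-Segal simplicial set. Then its left path space P◁X• (defined by (P◁X)_n = X_{n+1} with face maps ∂_i^◁ = ∂_{i+1} and degeneracy maps s_i^◁ = s_{i+1}) is a 1-Segal simplicial set. -/

import Mathlib

open CategoryTheory Simplicial SimplexCategory Opposite

namespace RelSegal

/-- The morphism `[m] ⟶ [n]` in the simplex category determined by a monotone `ℕ`-valued map. -/
def natHom (m n : ℕ) (f : ℕ → ℕ) (hf : Monotone f) (h : f m ≤ n) :
    (⦋m⦌ : SimplexCategory) ⟶ ⦋n⦌ :=
  SimplexCategory.mkHom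
    { toFun := fun k => ⟨f k.1, by have := hf (Nat.lt_succ_iff.mp k.2); omega⟩
      monotone' := fun a b hab => by
        simp only [Fin.mk_le_mk]; exact hf hab }

/-- Restriction of simplices along a morphism of the simplex category. -/
def rmap (X : SSet) {m n : ℕ} (φ : (⦋m⦌ : SimplexCategory) ⟶ ⦋n⦌) :
    X.obj (op ⦋n⦌) → X.obj (op ⦋m⦌) := X.map φ.op

/-- The inclusion of the vertex `i` of `[n]`. -/
def vert (n i : ℕ) (h : i ≤ n) : (⦋0⦌ : SimplexCategory) ⟶ ⦋n⦌ :=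
  natHom 0 n (fun _ => i) monotone_const h

/-- The inclusion of the edge `{i,j}` of `[n]`. -/
def edge (n i j : ℕ) (hij : i ≤ j) (hj : j ≤ n) : (⦋1⦌ : SimplexCategory) ⟶ ⦋n⦌ :=
  natHom 1 n (fun k => i + k * (j - i))
    (fun a b hab => by
      have := Nat.mul_le_mul_right (j - i) hab
      show i + a * (j - i) ≤ i + b * (j - i); omega)
    (by show i + 1 * (j - i) ≤ n; omega)

/-- The inclusion of the interval `{i, i+1, …, j}` of `[n]`. -/
def interval (n i j : ℕ) (hij : i ≤ j) (hj : j ≤ n) : (⦋j - i⦌ : SimplexCategory) ⟶ ⦋n⦌ :=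
  natHom (j - i) n (fun k => i + k) (fun a b hab => by show i + a ≤ i + b; omega)
    (by show i + (j - i) ≤ n; omega)

/-- A commutative square of sets which is a pullback: the canonical map into the fibre
product is a bijection. -/
def IsSetPullback {A B C D : Type*} (p : A → B) (q : A → C) (g : B → D) (h : C → D) : Prop :=
  (∀ a, g (p a) = h (q a)) ∧ ∀ b c, g b = h c → ∃! a, p a = b ∧ q a = c

/-- A simplicial set is `1`-Segal if for every `n ≥ 2` the Segal map
`X_n → X_1 ×_{X_0} ⋯ ×_{X_0} X_1` is a bijection (injectivity together with
surjectivity onto the compatible families). -/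
def Is1Segal (X : SSet) : Prop :=
  ∀ n, 2 ≤ n →
    (∀ x y : X.obj (op ⦋n⦌),
      (∀ i (hi : i + 1 ≤ n),
        rmap X (edge n i (i + 1) (by omega) hi) x = rmap X (edge n i (i + 1) (by omega) hi) y) →
      x = y) ∧
    (∀ f : ∀ i, i + 1 ≤ n → X.obj (op ⦋1⦌),
      (∀ i (h1 : i + 1 ≤ n) (h2 : (i + 1) + 1 ≤ n),
        rmap X (vert 1 1 le_rfl) (f i h1) = rmap X (vert 1 0 (by omega)) (f (i + 1) h2)) →
      ∃ x : X.obj (op ⦋n⦌), ∀ i (hi : i + 1 ≤ n),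
        rmap X (edge n i (i + 1) (by omega) hi) x = f i hi)

/-- The inclusion of the subset `{0, …, i, j, …, n}` of `[n]`. -/
def outer (n i j : ℕ) (hij : i < j) (hj : j ≤ n) :
    (⦋n - j + i + 1⦌ : SimplexCategory) ⟶ ⦋n⦌ :=
  natHom (n - j + i + 1) n (fun k => if k ≤ i then k else k + (j - i - 1))
    (fun a b hab => by dsimp only; split_ifs <;> omega)
    (by (try dsimp only); split_ifs <;> omega)

/-- A simplicial set is `2`-Segal if for every `n ≥ 3` and `0 ≤ i < j ≤ n` the map
`X_n → X_{{i,…,j}} ×_{X_{{i,j}}} X_{{0,…,i,j,…,n}}` is a bijection. -/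
def Is2Segal (X : SSet) : Prop :=
  ∀ n i j (_ : 3 ≤ n) (hij : i < j) (hj : j ≤ n),
    IsSetPullback
      (rmap X (interval n i j hij.le hj))
      (rmap X (outer n i j hij hj))
      (rmap X (edge (j - i) 0 (j - i) (Nat.zero_le _) le_rfl))
      (rmap X (edge (n - j + i + 1) i (i + 1) (by omega) (by omega)))

/-- The map `[m+1] ⟶ [n+1]` obtained from `f : [m] ⟶ [n]` by adjoining an initial
vertex (left join with a point). -/
def joinHom {m n : SimplexCategory} (f : m ⟶ n) :
    (⦋m.len + 1⦌ : SimplexCategory) ⟶ ⦋n.len + 1⦌ :=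
  SimplexCategory.mkHom
    { toFun := Fin.cases 0 (fun i => (f.toOrderHom i).succ)
      monotone' := by
        intro a b hab
        induction a using Fin.cases with
        | zero => simp [Fin.zero_le]
        | succ i =>
          induction b using Fin.cases with
          | zero => exact absurd (Fin.le_zero_iff.mp hab) (Fin.succ_ne_zero i)
          | succ j =>
            simp only [Fin.cases_succ]
            exact Fin.succ_le_succ_iff.mpr
              (f.toOrderHom.monotone (Fin.succ_le_succ_iff.mp hab)) }

/-- The left join functor `[n] ↦ [0] ⋆ [n] ≅ [n+1]` on the simplex category. -/
def leftJoin : SimplexCategory ⥤ SimplexCategory where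
  obj m := ⦋m.len + 1⦌
  map f := joinHom f
  map_id m := by
    apply SimplexCategory.Hom.ext
    apply OrderHom.ext
    funext k
    induction k using Fin.cases <;> simp [joinHom]
  map_comp f g := by
    apply SimplexCategory.Hom.ext
    apply OrderHom.ext
    funext k
    induction k using Fin.cases <;> simp [joinHom] <;> rfl

/-- The left path space of a simplicial set: precomposition with the left join,
so that `(P◁X)_n = X_{n+1}`, `∂ᵢ◁ = ∂_{i+1}` and `sᵢ◁ = s_{i+1}`. -/
def leftPath (X : SSet) : SSet := leftJoin.op ⋙ X


/-! ### Auxiliary lemmas -/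

lemma rmap_rmap (X : SSet) {k m n : ℕ} (ψ : (⦋k⦌ : SimplexCategory) ⟶ ⦋m⦌)
    (φ : (⦋m⦌ : SimplexCategory) ⟶ ⦋n⦌) (x : X.obj (op ⦋n⦌)) :
    rmap X ψ (rmap X φ x) = rmap X (ψ ≫ φ) x := by
  simp [rmap, ← FunctorToTypes.map_comp_apply, ← op_comp]

lemma hom_val_ext {m n : ℕ} (φ ψ : (⦋m⦌ : SimplexCategory) ⟶ ⦋n⦌)
    (H : ∀ k (hk : k < m + 1), (φ.toOrderHom ⟨k, hk⟩).1 = (ψ.toOrderHom ⟨k, hk⟩).1) :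
    φ = ψ := by
  apply SimplexCategory.Hom.ext; apply OrderHom.ext; funext k
  exact Fin.ext (H k.1 k.2)

lemma natHom_ext {m n : ℕ} {f g : ℕ → ℕ} {hf : Monotone f} {hg : Monotone g}
    {h1 : f m ≤ n} {h2 : g m ≤ n} (H : ∀ k, k ≤ m → f k = g k) :
    natHom m n f hf h1 = natHom m n g hg h2 := by
  apply hom_val_ext
  intro k hk
  show f k = g k
  exact H k (by omega)

lemma natHom_comp_eq {k m n : ℕ} {f g h : ℕ → ℕ} {hf : Monotone f} {hg : Monotone g}
    {hh : Monotone h} {b1 : f k ≤ m} {b2 : g m ≤ n} {b3 : h k ≤ n}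
    (H : ∀ x, x ≤ k → g (f x) = h x) :
    natHom k m f hf b1 ≫ natHom m n g hg b2 = natHom k n h hh b3 := by
  apply hom_val_ext
  intro x hx
  show g (f x) = h x
  exact H x (by omega)

lemma joinHom_natHom {m n : ℕ} (f : ℕ → ℕ) (hf : Monotone f) (h : f m ≤ n) :
    joinHom (natHom m n f hf h) =
      natHom (m + 1) (n + 1) (fun k => if k = 0 then 0 else f (k - 1) + 1)
        (fun a b hab => by
          dsimp only
          split_ifs with ha hb
          · exact le_rfl
          · exact Nat.zero_le _
          · omega
          · have := hf (show a - 1 ≤ b - 1 by omega); omega)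
        (by simp only [Nat.add_sub_cancel]; split_ifs <;> omega) := by
  apply SimplexCategory.Hom.ext; apply OrderHom.ext; funext k
  induction k using Fin.cases with
  | zero =>
    apply Fin.ext
    show (0 : Fin (n + 2)).1 = if (0 : ℕ) = 0 then 0 else f ((0 : ℕ) - 1) + 1
    simp
  | succ i =>
    apply Fin.ext
    show f i.1 + 1 = if i.1 + 1 = 0 then 0 else f (i.1 + 1 - 1) + 1
    simp

lemma joinHom_edge (n i j : ℕ) (hij : i ≤ j) (hj : j ≤ n) :
    joinHom (edge n i j hij hj) =
      natHom 2 (n + 1) (fun k => if k = 0 then 0 else i + (k - 1) * (j - i) + 1)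
        (fun a b hab => by
          dsimp only
          split_ifs with ha hb
          · exact le_rfl
          · exact Nat.zero_le _
          · omega
          · have := Nat.mul_le_mul_right (j - i) (show a - 1 ≤ b - 1 by omega); omega)
        (by (try dsimp only); split_ifs <;> omega) :=
  joinHom_natHom _ _ _

lemma joinHom_vert (n i : ℕ) (h : i ≤ n) :
    joinHom (vert n i h) =
      natHom 1 (n + 1) (fun k => if k = 0 then 0 else i + 1)
        (fun a b hab => by dsimp only; split_ifs <;> omega)
        (by (try dsimp only); split_ifs <;> omega) :=
  joinHom_natHom _ _ _

lemma eqA (m : ℕ) (p1 p2 p3 p4) :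
    joinHom (edge (m + 2) 0 1 p1 p2) = interval (m + 3) 0 2 p3 p4 := by
  rw [joinHom_edge]
  exact natHom_ext (fun k hk => by split_ifs <;> omega)

lemma eqB (p1 p2 p3) : joinHom (vert 1 0 p1) = edge 2 0 1 p2 p3 := by
  rw [joinHom_vert]
  exact natHom_ext (fun k hk => by split_ifs <;> omega)

lemma eqC (p1 p2 p3) : joinHom (vert 1 1 p1) = edge 2 0 2 p2 p3 := by
  rw [joinHom_vert]
  exact natHom_ext (fun k hk => by split_ifs <;> omega)

lemma eqD (m i : ℕ) (p1 p2 p3 p4 p5 p6) :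
    joinHom (edge (m + 1) i (i + 1) p1 p2) ≫ outer (m + 3) 0 2 p3 p4
      = joinHom (edge (m + 2) (i + 1) (i + 2) p5 p6) := by
  rw [joinHom_edge, joinHom_edge]
  exact natHom_comp_eq (fun x hx => by
    simp only [show i + 1 - i = 1 by omega, show i + 2 - (i + 1) = 1 by omega, mul_one]
    split_ifs <;> omega)

lemma eqE (m : ℕ) (p1 p2 p3 p4 p5 p6) :
    edge 2 0 1 p1 p2 ≫ joinHom (edge (m + 1) 0 1 p3 p4) = edge (m + 2) 0 1 p5 p6 := by
  rw [joinHom_edge]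
  exact natHom_comp_eq (fun x hx => by split_ifs <;> omega)

lemma edge_id (p1 p2) : edge 1 0 1 p1 p2 = 𝟙 (⦋1⦌ : SimplexCategory) :=
  hom_val_ext _ _ fun k hk => by show 0 + k * (1 - 0) = k; omega

lemma leftPath_rmap (X : SSet) {m n : ℕ} (φ : (⦋m⦌ : SimplexCategory) ⟶ ⦋n⦌)
    (x : (leftPath X).obj (op ⦋n⦌)) :
    rmap (leftPath X) φ x = rmap X (joinHom φ) x := rfl

/-- the left path space of a 2-Segal simplicial set is 1-Segal. -/
theorem statement5 (X : SSet) (hX : Is2Segal X) : Is1Segal (leftPath X) := by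
  suffices key : ∀ m : ℕ,
      (∀ x y : (leftPath X).obj (op ⦋m + 1⦌),
        (∀ i (hi : i + 1 ≤ m + 1),
          rmap (leftPath X) (edge (m + 1) i (i + 1) (by omega) hi) x =
            rmap (leftPath X) (edge (m + 1) i (i + 1) (by omega) hi) y) → x = y) ∧
      (∀ f : ∀ i, i + 1 ≤ m + 1 → (leftPath X).obj (op ⦋1⦌),
        (∀ i (h1 : i + 1 ≤ m + 1) (h2 : (i + 1) + 1 ≤ m + 1),
          rmap (leftPath X) (vert 1 1 le_rfl) (f i h1) =
            rmap (leftPath X) (vert 1 0 (by omega)) (f (i + 1) h2)) →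
        ∃ x : (leftPath X).obj (op ⦋m + 1⦌), ∀ i (hi : i + 1 ≤ m + 1),
          rmap (leftPath X) (edge (m + 1) i (i + 1) (by omega) hi) x = f i hi) by
    intro n hn
    obtain ⟨m, rfl⟩ : ∃ m, n = m + 1 := ⟨n - 1, by omega⟩
    exact key m
  intro m
  induction m with
  | zero =>
    constructor
    · intro x y hxy
      have h := hxy 0 le_rfl
      rw [edge_id] at h
      simpa [rmap] using h
    · intro f hf
      refine ⟨f 0 le_rfl, ?_⟩
      intro i hi
      obtain rfl : i = 0 := by omega
      rw [edge_id]
      simp only [rmap, op_id, FunctorToTypes.map_id_apply]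
  | succ m IH =>
    obtain ⟨pbc, pbu⟩ := hX (m + 3) 0 2 (by omega) (by omega) (by omega)
    constructor
    · intro x y hxy
      obtain ⟨a, -, ha⟩ := pbu _ _ (pbc x)
      have hx : x = a := ha x ⟨rfl, rfl⟩
      have hy : y = a := by
        refine ha y ⟨?_, ?_⟩
        · calc rmap X (interval (m + 3) 0 2 (by omega) (by omega)) y
              = rmap X (joinHom (edge (m + 2) 0 1 (by omega) (by omega))) y := by
                rw [eqA]
            _ = rmap X (joinHom (edge (m + 2) 0 1 (by omega) (by omega))) x :=
                (hxy 0 (by omega)).symm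
            _ = rmap X (interval (m + 3) 0 2 (by omega) (by omega)) x := by
                rw [eqA]
        · refine IH.1 _ _ ?_
          intro i hi
          calc (show X.obj (op ⦋(⦋1⦌ : SimplexCategory).len + 1⦌) from
                rmap (leftPath X) (edge (m + 1) i (i + 1) (by omega) hi)
                (rmap X (outer (m + 3) 0 2 (by omega) (by omega)) y))
              = rmap X (joinHom (edge (m + 1) i (i + 1) (by omega) hi) ≫
                  outer (m + 3) 0 2 (by omega) (by omega)) y := by
                exact rmap_rmap X _ _ _
            _ = rmap X (joinHom (edge (m + 2) (i + 1) (i + 2) (by omega) (by omega))) y := by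
                rw [eqD]
            _ = rmap X (joinHom (edge (m + 2) (i + 1) (i + 2) (by omega) (by omega))) x :=
                (hxy (i + 1) (by omega)).symm
            _ = rmap X (joinHom (edge (m + 1) i (i + 1) (by omega) hi) ≫
                  outer (m + 3) 0 2 (by omega) (by omega)) x := by
                rw [eqD]
            _ = (show X.obj (op ⦋(⦋1⦌ : SimplexCategory).len + 1⦌) from
                rmap (leftPath X) (edge (m + 1) i (i + 1) (by omega) hi)
                (rmap X (outer (m + 3) 0 2 (by omega) (by omega)) x)) :=
                (rmap_rmap X _ _ _).symm
      exact hx.trans hy.symm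
    · intro f hf
      obtain ⟨y, hy⟩ := IH.2 (fun i hi => f (i + 1) (by omega))
        (fun i h1 h2 => hf (i + 1) (by omega) (by omega))
      have hglue : rmap X (edge 2 0 2 (by omega) (by omega)) (f 0 (by omega))
          = rmap X (edge (m + 2) 0 1 (by omega) (by omega)) y := by
        calc rmap X (edge 2 0 2 (by omega) (by omega)) (f 0 (by omega))
            = rmap X (joinHom (vert 1 1 le_rfl)) (f 0 (by omega)) := by rw [eqC]
          _ = (show X.obj (op ⦋(⦋0⦌ : SimplexCategory).len + 1⦌) from
                rmap (leftPath X) (vert 1 0 (by omega)) (f 1 (by omega))) :=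
              hf 0 (by omega) (by omega)
          _ = rmap X (edge 2 0 1 (by omega) (by omega))
              (rmap (leftPath X) (edge (m + 1) 0 1 (by omega) (by omega)) y) := by
              rw [hy 0 (by omega), ← eqB (p1 := by omega) (p2 := by omega) (p3 := by omega)]
              exact leftPath_rmap X _ _
          _ = rmap X (edge 2 0 1 (by omega) (by omega) ≫
                joinHom (edge (m + 1) 0 1 (by omega) (by omega))) y := rmap_rmap _ _ _ _
          _ = rmap X (edge (m + 2) 0 1 (by omega) (by omega)) y := by rw [eqE]
      obtain ⟨x, ⟨hx1, hx2⟩, -⟩ := pbu _ _ hglue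
      refine ⟨x, ?_⟩
      intro i hi
      match i, hi with
      | 0, hi =>
        show rmap X (joinHom (edge (m + 2) 0 1 (by omega) (by omega))) x = f 0 hi
        rw [eqA (p3 := by omega) (p4 := by omega)]
        exact hx1
      | i + 1, hi =>
        show rmap X (joinHom (edge (m + 2) (i + 1) (i + 2) (by omega) (by omega))) x
          = f (i + 1) hi
        rw [← eqD m i (by omega) (by omega) (by omega) (by omega) (by omega) (by omega)]
        rw [← rmap_rmap]
        rw [hx2]
        exact hy i (by omega)


end RelSegal
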